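/- Conversely, if the map τ(z,u) = (z, φ(z)·u⁻¹) on the semidirect product G ⋉ K is a group homomorphism, where φ : G → K is a bijective 1-cocycle, then K is abelian. -/

import Mathlib

theorem abelian_of_tau_hom (G K : Type*) [Group G] [Group K]
    (act : K → G → K)
    (act_mul : ∀ u v : K, ∀ g : G, act (u * v) g = act u g * act v g)
    (act_comp : ∀ u : K, ∀ g h : G, act u (g * h) = act (act u g) h)
    (act_one : ∀ u : K, act u 1 = u)
    (φ : G → K) (hbij : Function.Bijective φ)
    (hcoc : ∀ f g : G, φ (f * g) = act (φ f) g * φ g)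
    (hτ : ∀ p q : G × K,
      (fun p : G × K => (p.1, φ p.1 * p.2⁻¹))
          ((fun p q : G × K => (p.1 * q.1, act p.2 q.1 * q.2)) p q) =
        (fun p q : G × K => (p.1 * q.1, act p.2 q.1 * q.2))
          ((fun p : G × K => (p.1, φ p.1 * p.2⁻¹)) p)
          ((fun p : G × K => (p.1, φ p.1 * p.2⁻¹)) q)) :
    ∀ u v : K, u * v = v * u := by
  have h1 : φ 1 = 1 := by
    have h := hcoc 1 1
    rw [act_one, one_mul] at h
    exact mul_eq_left.mp h.symm
  intro u v
  have h := congrArg Prod.snd (hτ (1, u) (1, v⁻¹))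
  simp only [one_mul, act_one, h1, mul_inv_rev, inv_inv] at h
  -- h : v * u⁻¹ = u⁻¹ * v  (roughly)
  have : v * u⁻¹ = u⁻¹ * v := by
    simpa using h
  calc u * v = u * (v * u⁻¹) * u := by group
    _ = u * (u⁻¹ * v) * u := by rw [this]
    _ = v * u := by group
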